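/- An oriented Cayley graph Cay(G,C) with skew adjacency matrix S has uniform mixing at time τ (i.e., all entries of e^{τS} have absolute value 1/√|G|) if and only if there exist signs t_j ∈ {±1}, one for each conjugacy class K_j of G, such that √|G|·e^{τS} = Σ_j t_j K_j, where K_j denotes the 0-1 matrix of the corresponding class sum acting by the regular representation. -/

import Mathlib

noncomputable section

instance (G : Type*) [Group G] [Fintype G] : Fintype (ConjClasses G) :=
  Fintype.ofFinite _

/-- The skew adjacency matrix of the oriented Cayley graph `Cay(G, C)`:
entry `(u, v)` is `1` if `v * u⁻¹ ∈ C`, `-1` if `(v * u⁻¹)⁻¹ ∈ C`, and `0`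
otherwise. -/
def skewAdj (G : Type*) [Group G] [Fintype G] [DecidableEq G] (C : Finset G) :
    Matrix G G ℝ :=
  fun u v => if v * u⁻¹ ∈ C then 1 else if (v * u⁻¹)⁻¹ ∈ C then -1 else 0

open scoped Classical in
/-- The 0-1 matrix of the conjugacy class sum `K` acting by the right regular
representation: entry `(u, v)` is `1` if `v * u⁻¹` lies in the class. -/
def classMatrix (G : Type*) [Group G] [Fintype G] [DecidableEq G]
    (c : ConjClasses G) : Matrix G G ℝ :=
  fun u v => if v * u⁻¹ ∈ c.carrier then 1 else 0

open NormedSpace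

lemma exp_reindex_aux {G : Type*} [Fintype G] [DecidableEq G] (e : G ≃ G) (A : Matrix G G ℝ) :
    exp (Matrix.reindexAlgEquiv ℝ ℝ e A) = Matrix.reindexAlgEquiv ℝ ℝ e (exp A) := by
  letI : SeminormedRing (Matrix G G ℝ) := Matrix.linftyOpSemiNormedRing
  letI : NormedRing (Matrix G G ℝ) := Matrix.linftyOpNormedRing
  letI : NormedAlgebra ℝ (Matrix G G ℝ) := Matrix.linftyOpNormedAlgebra
  letI : NormedAlgebra ℚ (Matrix G G ℝ) := Matrix.linftyOpNormedAlgebra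
  refine (map_exp (Matrix.reindexAlgEquiv ℝ ℝ e) ?_ A).symm
  show Continuous fun M : Matrix G G ℝ => Matrix.reindexAlgEquiv ℝ ℝ e M
  simp only [Matrix.reindexAlgEquiv_apply, Matrix.reindex_apply]
  exact continuous_id.matrix_submatrix _ _

/-- If `A` is invariant under simultaneous row/column permutation by `e`, so is `exp ℝ A`. -/
lemma exp_invariant {G : Type*} [Fintype G] [DecidableEq G] (e : G ≃ G) (A : Matrix G G ℝ)
    (hA : ∀ u v, A (e u) (e v) = A u v) (u v : G) :
    exp A (e u) (e v) = exp A u v := by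
  have key : Matrix.reindexAlgEquiv ℝ ℝ e.symm A = A := by
    ext u v
    simp [Matrix.reindexAlgEquiv_apply, Matrix.reindex_apply, Matrix.submatrix_apply, hA]
  have := exp_reindex_aux e.symm A
  rw [key] at this
  have h2 := congrFun (congrFun this u) v
  simpa [Matrix.reindexAlgEquiv_apply, Matrix.reindex_apply, Matrix.submatrix_apply] using h2.symm

/-- Lift a conjugation-invariant function to conjugacy classes. -/
def clift {G : Type*} [Monoid G] (f : G → ℝ)
    (h : ∀ a b : G, IsConj a b → f a = f b) : ConjClasses G → ℝ :=
  Quotient.lift f h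

lemma clift_mk {G : Type*} [Monoid G] (f : G → ℝ)
    (h : ∀ a b : G, IsConj a b → f a = f b) (x : G) :
    clift f h (ConjClasses.mk x) = f x := rfl

theorem stmt16 (G : Type*) [Group G] [Fintype G] [DecidableEq G] (C : Finset G)
    (h1 : (1 : G) ∉ C) (h2 : ∀ c ∈ C, c⁻¹ ∉ C)
    (hconj : ∀ g ∈ C, ∀ h, IsConj g h → h ∈ C) (τ : ℝ) :
    (∀ u v : G,
        |NormedSpace.exp (τ • skewAdj G C) u v| = 1 / Real.sqrt (Nat.card G)) ↔
    ∃ t : ConjClasses G → ℝ, (∀ c, t c = 1 ∨ t c = -1) ∧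
      Real.sqrt (Nat.card G) • NormedSpace.exp (τ • skewAdj G C) =
        ∑ c : ConjClasses G, t c • classMatrix G c := by
  classical
  set n : ℝ := Real.sqrt (Nat.card G) with hn
  have hnpos : 0 < n := Real.sqrt_pos.2 (by exact_mod_cast Nat.card_pos)
  set E : Matrix G G ℝ := NormedSpace.exp (τ • skewAdj G C) with hE
  -- C is closed under conjugation, both ways
  have hCc : ∀ (g x : G), g * x * g⁻¹ ∈ C ↔ x ∈ C := by
    intro g x
    constructor
    · intro hm
      exact hconj _ hm x (isConj_iff.2 ⟨g⁻¹, by group⟩)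
    · intro hm
      exact hconj _ hm _ (isConj_iff.2 ⟨g, rfl⟩)
  -- right invariance of skewAdj
  have hSr : ∀ (g u v : G), skewAdj G C (u * g) (v * g) = skewAdj G C u v := by
    intro g u v
    have e1 : v * g * (u * g)⁻¹ = v * u⁻¹ := by group
    simp only [skewAdj]
    rw [e1]
  -- left invariance of skewAdj
  have hSl : ∀ (g u v : G), skewAdj G C (g * u) (g * v) = skewAdj G C u v := by
    intro g u v
    have e1 : g * v * (g * u)⁻¹ = g * (v * u⁻¹) * g⁻¹ := by group
    have e2 : (g * (v * u⁻¹) * g⁻¹)⁻¹ = g * (v * u⁻¹)⁻¹ * g⁻¹ := by group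
    simp only [skewAdj]
    rw [e1, e2]
    simp only [hCc]
  -- right invariance of E
  have hEr : ∀ (g u v : G), E (u * g) (v * g) = E u v := by
    intro g u v
    exact exp_invariant (Equiv.mulRight g) (τ • skewAdj G C)
      (fun u v => by simp [Matrix.smul_apply, hSr]) u v
  -- left invariance of E
  have hEl : ∀ (g u v : G), E (g * u) (g * v) = E u v := by
    intro g u v
    exact exp_invariant (Equiv.mulLeft g) (τ • skewAdj G C)
      (fun u v => by simp [Matrix.smul_apply, hSl]) u v
  set f : G → ℝ := fun x => E 1 x with hf
  have hEf : ∀ u v : G, E u v = f (v * u⁻¹) := by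
    intro u v
    have := hEr u⁻¹ u v
    simpa using this.symm
  have hfc : ∀ (g x : G), f (g * x * g⁻¹) = f x := by
    intro g x
    have h5 : E g (g * x) = E 1 x := by simpa using hEl g 1 x
    have h6 : E 1 (g * x * g⁻¹) = E g (g * x) := by simpa using hEr g⁻¹ g (g * x)
    show E 1 (g * x * g⁻¹) = E 1 x
    rw [h6, h5]
  -- f respects conjugacy
  have hrel : ∀ a b : G, IsConj a b → f a = f b := by
    intro a b hab
    obtain ⟨g, hg⟩ := isConj_iff.1 hab
    rw [← hg, hfc]
  have hmem : ∀ (x : G) (c : ConjClasses G), (x ∈ c.carrier ↔ ConjClasses.mk x = c) :=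
    fun x c => ConjClasses.mem_carrier_iff_mk_eq
  constructor
  · intro h
    have hresp : ∀ (a b : G), IsConj a b → n * f a = n * f b := fun a b hab => by
      rw [hrel a b hab]
    refine ⟨clift (fun x => n * f x) hresp, ?_, ?_⟩
    · intro c
      obtain ⟨x, rfl⟩ := ConjClasses.mk_surjective c
      have hx := h 1 x
      have habs : |n * E 1 x| = 1 := by
        rw [abs_mul, abs_of_pos hnpos, hx]
        field_simp
      exact (abs_eq (by norm_num : (0:ℝ) ≤ 1)).1 habs
    · ext u v
      have hterm : ∀ c : ConjClasses G,
          (clift (fun x => n * f x) hresp c • classMatrix G c) u v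
          = if ConjClasses.mk (v * u⁻¹) = c then
              clift (fun x => n * f x) hresp c else 0 := by
        intro c
        simp only [Matrix.smul_apply, classMatrix, smul_eq_mul]
        by_cases hc : ConjClasses.mk (v * u⁻¹) = c
        · rw [if_pos ((hmem _ c).2 hc), if_pos hc, mul_one]
        · rw [if_neg (fun hm => hc ((hmem _ c).1 hm)), if_neg hc, mul_zero]
      have hsum : (∑ c : ConjClasses G,
          clift (fun x => n * f x) hresp c • classMatrix G c) u v
          = n * f (v * u⁻¹) := by
        rw [Matrix.sum_apply]
        rw [Finset.sum_congr rfl (fun c _ => hterm c), Finset.sum_ite_eq]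
        simp only [Finset.mem_univ, if_true]
        rfl
      rw [hsum, Matrix.smul_apply, smul_eq_mul, hEf u v]
  · rintro ⟨t, ht, heq⟩
    intro u v
    have hentry := congrFun (congrFun heq u) v
    rw [Matrix.smul_apply, smul_eq_mul] at hentry
    have hsum : (∑ c : ConjClasses G, t c • classMatrix G c) u v
        = t (ConjClasses.mk (v * u⁻¹)) := by
      rw [Matrix.sum_apply]
      have hterm : ∀ c : ConjClasses G, (t c • classMatrix G c) u v
          = if ConjClasses.mk (v * u⁻¹) = c then t c else 0 := by
        intro c
        simp only [Matrix.smul_apply, classMatrix, smul_eq_mul]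
        by_cases hc : ConjClasses.mk (v * u⁻¹) = c
        · rw [if_pos ((hmem _ c).2 hc), if_pos hc, mul_one]
        · rw [if_neg (fun hm => hc ((hmem _ c).1 hm)), if_neg hc, mul_zero]
      rw [Finset.sum_congr rfl (fun c _ => hterm c), Finset.sum_ite_eq]
      simp
    rw [hsum] at hentry
    have hEuv : E u v = t (ConjClasses.mk (v * u⁻¹)) / n := by
      rw [eq_div_iff hnpos.ne', mul_comm]
      exact hentry
    rw [hEuv, abs_div, abs_of_pos hnpos]
    rcases ht (ConjClasses.mk (v * u⁻¹)) with h' | h' <;> rw [h'] <;> norm_num
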